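/- Let 0 < ε < 1. For all positive reals x, y, z and all (x', y', z') ∈ B_ε(x, y, z), one has |E(x, y, z) − E(x', y', z')| ≤ 20·ε·max{x, y, z}. -/
import Mathlib


open Real

/-- The piecewise linear function `E` on the positive octant. -/
noncomputable def E (x y z : ℝ) : ℝ :=
  if x + y ≤ z then z - x - y
  else if |x - y| ≤ z then (z - x - y) / 2
  else -min x y

/-- `(x',y',z') ∈ B_ε(x,y,z)`: each ratio is within a factor `1 + ε`. -/
def memB (ε x y z x' y' z' : ℝ) : Prop :=
  (1 / (1 + ε) < x / x' ∧ x / x' < 1 + ε) ∧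
  (1 / (1 + ε) < y / y' ∧ y / y' < 1 + ε) ∧
  (1 / (1 + ε) < z / z' ∧ z / z' < 1 + ε)

lemma E_eq_max (x y z : ℝ) (hx : 0 < x) (hy : 0 < y) :
    E x y z = max (z - x - y) (max ((z - x - y) / 2) (-(min x y))) := by
  unfold E
  rcases le_total x y with hxy | hxy
  · rw [min_eq_left hxy, abs_sub_comm x y, abs_of_nonneg (by linarith)]
    split_ifs with h1 h2
    · rw [max_eq_left]; exact max_le (by linarith) (by linarith)
    · push_neg at h1
      rw [max_eq_left (by linarith : -x ≤ (z - x - y) / 2),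
        max_eq_right (by linarith : z - x - y ≤ (z - x - y) / 2)]
    · push_neg at h1 h2
      rw [max_eq_right (by linarith : (z - x - y) / 2 ≤ -x),
        max_eq_right (by linarith : z - x - y ≤ -x)]
  · rw [min_eq_right hxy, abs_of_nonneg (by linarith)]
    split_ifs with h1 h2
    · rw [max_eq_left]; exact max_le (by linarith) (by linarith)
    · push_neg at h1
      rw [max_eq_left (by linarith : -y ≤ (z - x - y) / 2),
        max_eq_right (by linarith : z - x - y ≤ (z - x - y) / 2)]
    · push_neg at h1 h2
      rw [max_eq_right (by linarith : (z - x - y) / 2 ≤ -y),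
        max_eq_right (by linarith : z - x - y ≤ -y)]

lemma tri3 (a b c : ℝ) : |a - b - c| ≤ |a| + |b| + |c| := by
  have h1 : |a - b - c| ≤ |a - b| + |c| := by
    have := abs_add_le (a - b) (-c); simpa [sub_eq_add_neg] using this
  have h2 : |a - b| ≤ |a| + |b| := by
    have := abs_add_le a (-b); simpa [sub_eq_add_neg] using this
  linarith

lemma E_lip (x y z x' y' z' : ℝ) (hx : 0 < x) (hy : 0 < y)
    (hx' : 0 < x') (hy' : 0 < y') :
    |E x y z - E x' y' z'| ≤ |x - x'| + |y - y'| + |z - z'| := by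
  rw [E_eq_max x y z hx hy, E_eq_max x' y' z' hx' hy']
  refine (abs_max_sub_max_le_max _ _ _ _).trans (max_le ?_
    ((abs_max_sub_max_le_max _ _ _ _).trans (max_le ?_ ?_)))
  · have h : z - x - y - (z' - x' - y') = (z - z') - (x - x') - (y - y') := by ring
    rw [h]
    calc |(z - z') - (x - x') - (y - y')| ≤ |z - z'| + |x - x'| + |y - y'| :=
          tri3 _ _ _
      _ ≤ _ := by linarith
  · have h : (z - x - y) / 2 - (z' - x' - y') / 2
        = ((z - z') - (x - x') - (y - y')) / 2 := by ring
    rw [h, abs_div]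
    have := tri3 (z - z') (x - x') (y - y')
    have h2 : |(2 : ℝ)| = 2 := by norm_num
    rw [h2]
    linarith [abs_nonneg (z - z' - (x - x') - (y - y'))]
  · have h : -min x y - -min x' y' = -(min x y - min x' y') := by ring
    rw [h, abs_neg]
    refine (abs_min_sub_min_le_max _ _ _ _).trans ?_
    exact max_le (by linarith [abs_nonneg (y - y'), abs_nonneg (z - z')])
      (by linarith [abs_nonneg (x - x'), abs_nonneg (z - z')])

/-- Inequality (E-1): the piecewise linear function `E` varies by at most
`20·ε·max{x,y,z}` on the comparability ball `B_ε(x,y,z)`. -/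
theorem stmt_7 (ε : ℝ) (hε0 : 0 < ε) (hε1 : ε < 1) :
    ∀ x y z x' y' z' : ℝ,
      0 < x → 0 < y → 0 < z → 0 < x' → 0 < y' → 0 < z' →
      memB ε x y z x' y' z' →
      |E x y z - E x' y' z'| ≤ 20 * ε * max (max x y) z := by
  intro x y z x' y' z' hx hy hz hx' hy' hz' hB
  obtain ⟨⟨hx1, hx2⟩, ⟨hy1, hy2⟩, ⟨hz1, hz2⟩⟩ := hB
  have hεp : (0 : ℝ) < 1 + ε := by linarith
  have key : ∀ a a' : ℝ, 0 < a → 0 < a' →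
      1 / (1 + ε) < a / a' → a / a' < 1 + ε → |a - a'| ≤ 2 * ε * a := by
    intro a a' ha ha' h1 h2
    have hu : a < (1 + ε) * a' := by
      rw [div_lt_iff₀ ha'] at h2; linarith [h2]
    have hl : a' < (1 + ε) * a := by
      rw [div_lt_div_iff₀ hεp ha'] at h1; linarith [h1]
    rw [abs_sub_le_iff]
    constructor <;> nlinarith
  have bx := key x x' hx hx' hx1 hx2
  have by' := key y y' hy hy' hy1 hy2
  have bz := key z z' hz hz' hz1 hz2
  have hM1 : x ≤ max (max x y) z := le_trans (le_max_left x y) (le_max_left _ _)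
  have hM2 : y ≤ max (max x y) z := le_trans (le_max_right x y) (le_max_left _ _)
  have hM3 : z ≤ max (max x y) z := le_max_right _ _
  have := E_lip x y z x' y' z' hx hy hx' hy'
  nlinarith [this]
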